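/- Over the frame (ℕ,<), a monotone hybrid formula φ ∈ MHL(□,@) (no negation, no ◇, no ↓) is satisfiable (i.e., there exist a valuation η : NOM → ℕ and k ∈ ℕ with η,k ⊨ φ) if and only if η₀,0 ⊨ φ, where η₀ is the valuation that maps every nominal to 0. -/
import Mathlib


/-- Formulas of monotone hybrid logic MHL(□,@) over nominals. -/
inductive HForm : Type
  | nom : ℕ → HForm
  | top : HForm
  | bot : HForm
  | conj : HForm → HForm → HForm
  | disj : HForm → HForm → HForm
  | box : HForm → HForm
  | at_ : ℕ → HForm → HForm

/-- Satisfaction over the frame (ℕ,<) with nominal valuation η. -/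
def sat (η : ℕ → ℕ) (k : ℕ) : HForm → Prop
  | .nom i => η i = k
  | .top => True
  | .bot => False
  | .conj a b => sat η k a ∧ sat η k b
  | .disj a b => sat η k a ∨ sat η k b
  | .box a => ∀ k' > k, sat η k' a
  | .at_ i a => sat η (η i) a

lemma main_aux (φ : HForm) :
    (∀ η k, sat η k φ → sat (fun _ => 0) 0 φ) ∧
    (∀ η : ℕ → ℕ, (∀ k, ∃ k' > k, sat η k' φ) → ∀ m > 0, sat (fun _ => 0) m φ) := by
  induction φ with
  | nom i =>
    constructor
    · intro η k h; rfl
    · intro η h m hm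
      obtain ⟨k', hk', hs⟩ := h (η i)
      simp only [sat] at hs
      exact absurd hk' (by omega)
  | top => exact ⟨fun _ _ _ => trivial, fun _ _ _ _ => trivial⟩
  | bot =>
    constructor
    · intro η k h; exact h.elim
    · intro η h m hm; obtain ⟨k', _, hs⟩ := h 0; exact hs.elim
  | conj a b iha ihb =>
    constructor
    · intro η k h; exact ⟨iha.1 η k h.1, ihb.1 η k h.2⟩
    · intro η h m hm
      refine ⟨iha.2 η (fun k => ?_) m hm, ihb.2 η (fun k => ?_) m hm⟩
      · obtain ⟨k', hk', hs⟩ := h k; exact ⟨k', hk', hs.1⟩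
      · obtain ⟨k', hk', hs⟩ := h k; exact ⟨k', hk', hs.2⟩
  | disj a b iha ihb =>
    constructor
    · intro η k h
      rcases h with h | h
      · exact Or.inl (iha.1 η k h)
      · exact Or.inr (ihb.1 η k h)
    · intro η h m hm
      by_cases hc : ∀ k, ∃ k' > k, sat η k' a
      · exact Or.inl (iha.2 η hc m hm)
      · push_neg at hc
        obtain ⟨K, hK⟩ := hc
        refine Or.inr (ihb.2 η (fun k => ?_) m hm)
        obtain ⟨k', hk', hs⟩ := h (max k K)
        rcases hs with hs | hs
        · exact absurd hs (hK k' (lt_of_le_of_lt (le_max_right _ _) hk'))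
        · exact ⟨k', lt_of_le_of_lt (le_max_left _ _) hk', hs⟩
  | box a iha =>
    constructor
    · intro η k h m hm
      exact iha.2 η (fun j => ⟨max j k + 1, by omega, h _ (by omega)⟩) m (by omega)
    · intro η h m hm m' hm'
      obtain ⟨k', hk', hs⟩ := h 0
      exact iha.2 η (fun j => ⟨max j k' + 1, by omega, hs _ (by omega)⟩) m' (by omega)
  | at_ i a iha =>
    constructor
    · intro η k h; exact iha.1 η (η i) h
    · intro η h m hm
      obtain ⟨k', _, hs⟩ := h 0
      exact iha.1 η (η i) hs

/-- φ ∈ MHL(□,@) is satisfiable over (ℕ,<) iff η₀,0 ⊨ φ where η₀ maps every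
nominal to 0. -/
theorem stmt3 (φ : HForm) :
    (∃ (η : ℕ → ℕ) (k : ℕ), sat η k φ) ↔ sat (fun _ => 0) 0 φ := by
  constructor
  · rintro ⟨η, k, h⟩; exact (main_aux φ).1 η k h
  · intro h; exact ⟨fun _ => 0, 0, h⟩
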